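/- Let X ∈ H^d with tr(X) = 1 and X = xx* rank one, and suppose Δ ∈ H^d satisfies: (i) the injectivity bound ||Δ_T||_2 ≤ 2d·||Δ_T^⊥||_2, and (ii) there exists Y ∈ H^d with (Y,Δ) = 0, ||Y_T − X||_2 ≤ 1/(4d), and ||Y_T^⊥||_∞ ≤ 1/2, where Δ_T = P_T(Δ), Δ_T^⊥ = Δ − Δ_T. Then tr(Δ_T) + ||Δ_T^⊥||_1 ≥ 0, with strict inequality if ||Δ_T||_2 < 2d·||Δ_T^⊥||_2 strictly and Δ_T^⊥ ≠ 0. -/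

import Mathlib

open Matrix BigOperators ComplexOrder

/-- The trace norm `‖M‖₁ = tr √(Mᴴ M)`. -/
noncomputable def tnorm {d : ℕ} (M : Matrix (Fin d) (Fin d) ℂ) : ℝ :=
  (((Matrix.posSemidef_conjTranspose_mul_self M).1.eigenvectorUnitary.1 *
      diagonal (((↑) : ℝ → ℂ) ∘ (√·) ∘ (Matrix.posSemidef_conjTranspose_mul_self M).1.eigenvalues) *
      (star (Matrix.posSemidef_conjTranspose_mul_self M).1.eigenvectorUnitary :
        Matrix (Fin d) (Fin d) ℂ)).trace).re

/-- The Frobenius norm `‖M‖₂ = √tr(Mᴴ M)`. -/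
noncomputable def fnorm {d : ℕ} (M : Matrix (Fin d) (Fin d) ℂ) : ℝ :=
  Real.sqrt (((Mᴴ * M).trace).re)

/-- The operator norm of a matrix, acting on Euclidean space `ℂ^d`. -/
noncomputable def onorm {d : ℕ} (M : Matrix (Fin d) (Fin d) ℂ) : ℝ :=
  ‖Matrix.toEuclideanCLM (𝕜 := ℂ) M‖

/-- `P_T(Z) = XZ + ZX − tr(XZ)·X`. -/
noncomputable def PT {d : ℕ} (X Z : Matrix (Fin d) (Fin d) ℂ) : Matrix (Fin d) (Fin d) ℂ :=
  X * Z + Z * X - (X * Z).trace • X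

/-! ### auxiliary lemmas -/

theorem aux_tnorm_herm {d : ℕ} (B : Matrix (Fin d) (Fin d) ℂ) (hB : B.IsHermitian) :
    tnorm B = ∑ i, |hB.eigenvalues i| := by
  have e1 : tnorm B = ((cfc Real.sqrt (Bᴴ * B)).trace).re := by
    rw [(Matrix.posSemidef_conjTranspose_mul_self B).1.cfc_eq, Matrix.IsHermitian.cfc,
      Unitary.conjStarAlgAut_apply]
    rfl
  have e2 : cfc Real.sqrt (Bᴴ * B) = cfc (fun t : ℝ => |t|) B := by
    rw [hB.eq, ← sq, ← cfc_comp_pow Real.sqrt 2 B]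
    congr 1
    funext t
    exact Real.sqrt_sq_eq_abs t
  set U : Matrix (Fin d) (Fin d) ℂ := (hB.eigenvectorUnitary : Matrix (Fin d) (Fin d) ℂ) with hU
  set lam := hB.eigenvalues
  have hUU : star U * U = 1 := (Matrix.mem_unitaryGroup_iff').mp hB.eigenvectorUnitary.2
  rw [e1, e2, hB.cfc_eq, Matrix.IsHermitian.cfc, Unitary.conjStarAlgAut_apply,
    ← hU, Matrix.trace_mul_cycle, hUU, Matrix.one_mul, Matrix.trace_diagonal]
  simp [Complex.ofReal_re]
  rfl

theorem aux_fnorm_sq_herm {d : ℕ} (B : Matrix (Fin d) (Fin d) ℂ) (hB : B.IsHermitian) :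
    ((Bᴴ * B).trace).re = ∑ i, (hB.eigenvalues i) ^ 2 := by
  set U : Matrix (Fin d) (Fin d) ℂ := (hB.eigenvectorUnitary : Matrix (Fin d) (Fin d) ℂ) with hU
  set lam := hB.eigenvalues
  have hUU : star U * U = 1 := (Matrix.mem_unitaryGroup_iff').mp hB.eigenvectorUnitary.2
  have h2 : Bᴴ * B = U * (diagonal (RCLike.ofReal ∘ lam) * diagonal (RCLike.ofReal ∘ lam))
      * star U := by
    rw [hB.eq]
    conv_lhs => rw [hB.spectral_theorem]
    rw [Unitary.conjStarAlgAut_apply, ← hU]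
    simp only [Matrix.mul_assoc]
    rw [← Matrix.mul_assoc (star U) U, hUU, Matrix.one_mul]
  rw [h2, Matrix.trace_mul_cycle, hUU, Matrix.one_mul, Matrix.diagonal_mul_diagonal,
    Matrix.trace_diagonal, Complex.re_sum]
  refine Finset.sum_congr rfl fun i _ => ?_
  simp only [Function.comp, RCLike.ofReal, ← Complex.ofReal_mul, ← sq, Complex.ofReal_re]
  norm_cast

theorem aux_fnorm_le_tnorm {d : ℕ} (B : Matrix (Fin d) (Fin d) ℂ) (hB : B.IsHermitian) :
    fnorm B ≤ tnorm B := by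
  rw [aux_tnorm_herm B hB]
  show Real.sqrt _ ≤ _
  rw [aux_fnorm_sq_herm B hB]
  have h1 : ∑ i, (hB.eigenvalues i) ^ 2 ≤ (∑ i, |hB.eigenvalues i|) ^ 2 := by
    have := Finset.sum_sq_le_sq_sum_of_nonneg
      (s := Finset.univ) (f := fun i => |hB.eigenvalues i|) (fun i _ => abs_nonneg _)
    simpa [sq_abs] using this
  calc Real.sqrt (∑ i, (hB.eigenvalues i) ^ 2)
      ≤ Real.sqrt ((∑ i, |hB.eigenvalues i|) ^ 2) := Real.sqrt_le_sqrt h1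
    _ = ∑ i, |hB.eigenvalues i| :=
        Real.sqrt_sq (Finset.sum_nonneg fun i _ => abs_nonneg _)

theorem aux_tnorm_nonneg {d : ℕ} (B : Matrix (Fin d) (Fin d) ℂ) (hB : B.IsHermitian) :
    0 ≤ tnorm B := by
  rw [aux_tnorm_herm B hB]
  exact Finset.sum_nonneg fun i _ => abs_nonneg _

theorem aux_holder {d : ℕ} (A B : Matrix (Fin d) (Fin d) ℂ) (hB : B.IsHermitian) :
    |((A * B).trace).re| ≤ onorm A * tnorm B := by
  rw [aux_tnorm_herm B hB]
  show _ ≤ (‖Matrix.toEuclideanCLM (𝕜 := ℂ) A‖) * ∑ i, |hB.eigenvalues i|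
  set U : Matrix (Fin d) (Fin d) ℂ := (hB.eigenvectorUnitary : Matrix (Fin d) (Fin d) ℂ) with hU
  set lam := hB.eigenvalues with hlam
  have key : (A * B).trace = ∑ i, (star U * A * U) i i * (lam i : ℂ) := by
    conv_lhs => rw [hB.spectral_theorem]
    rw [Unitary.conjStarAlgAut_apply, ← hU, ← Matrix.mul_assoc, ← Matrix.mul_assoc, Matrix.trace_mul_comm]
    have hM : star U * (A * U * diagonal (RCLike.ofReal ∘ lam)) =
        (star U * A * U) * diagonal (RCLike.ofReal ∘ lam) := by
      simp [Matrix.mul_assoc]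
    rw [hM, Matrix.trace]
    congr 1
    funext i
    rw [Matrix.diag_apply, Matrix.mul_diagonal]
    rfl
  have hdiag : ∀ i, |((star U * A * U) i i).re| ≤ ‖Matrix.toEuclideanCLM (𝕜 := ℂ) A‖ := by
    intro i
    set v : EuclideanSpace ℂ (Fin d) := hB.eigenvectorBasis i with hv
    have hvnorm : ‖v‖ = 1 := hB.eigenvectorBasis.orthonormal.1 i
    have hentry : (star U * A * U) i i = inner ℂ v (Matrix.toEuclideanCLM (𝕜 := ℂ) A v) := by
      rw [EuclideanSpace.inner_eq_star_dotProduct, Matrix.ofLp_toEuclideanCLM]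
      rw [Matrix.mul_apply]
      simp only [Matrix.mul_apply, Matrix.star_apply, dotProduct, Matrix.mulVec,
        dotProduct, Pi.star_apply, hU, Matrix.IsHermitian.eigenvectorUnitary_apply,
        Matrix.toLin'_apply, Finset.mul_sum, Finset.sum_mul]
      rw [Finset.sum_comm]
      refine Finset.sum_congr rfl fun a _ => Finset.sum_congr rfl fun b _ => by ring
    rw [hentry]
    calc |(inner ℂ v (Matrix.toEuclideanCLM (𝕜 := ℂ) A v) : ℂ).re|
        ≤ ‖(inner ℂ v (Matrix.toEuclideanCLM (𝕜 := ℂ) A v) : ℂ)‖ := Complex.abs_re_le_norm _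
      _ ≤ ‖v‖ * ‖Matrix.toEuclideanCLM (𝕜 := ℂ) A v‖ := norm_inner_le_norm _ _
      _ ≤ ‖v‖ * (‖Matrix.toEuclideanCLM (𝕜 := ℂ) A‖ * ‖v‖) := by
          gcongr
          exact ContinuousLinearMap.le_opNorm _ _
      _ = ‖Matrix.toEuclideanCLM (𝕜 := ℂ) A‖ := by rw [hvnorm]; ring
  rw [key]
  have hre : ((∑ i, (star U * A * U) i i * (lam i : ℂ)).re)
      = ∑ i, ((star U * A * U) i i).re * lam i := by
    rw [Complex.re_sum]
    congr 1
    funext i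
    rw [Complex.mul_re]
    simp
  rw [hre]
  calc |∑ i, ((star U * A * U) i i).re * lam i|
      ≤ ∑ i, |((star U * A * U) i i).re * lam i| := Finset.abs_sum_le_sum_abs _ _
    _ ≤ ∑ i, ‖Matrix.toEuclideanCLM (𝕜 := ℂ) A‖ * |lam i| := by
        apply Finset.sum_le_sum
        intro i _
        rw [abs_mul]
        exact mul_le_mul_of_nonneg_right (hdiag i) (abs_nonneg _)
    _ = ‖Matrix.toEuclideanCLM (𝕜 := ℂ) A‖ * ∑ i, |lam i| := by rw [← Finset.mul_sum]

theorem aux_trace_ct_mul {d : ℕ} (C D : Matrix (Fin d) (Fin d) ℂ) :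
    ((Cᴴ * D).trace) = ∑ p : Fin d × Fin d, (starRingEnd ℂ) (C p.2 p.1) * D p.2 p.1 := by
  rw [Matrix.trace]
  simp only [Matrix.diag_apply, Matrix.mul_apply, Matrix.conjTranspose_apply]
  rw [← Finset.sum_product']
  rfl

theorem aux_fnorm_sq_entries {d : ℕ} (A : Matrix (Fin d) (Fin d) ℂ) :
    ((Aᴴ * A).trace).re = ∑ p : Fin d × Fin d, ‖A p.2 p.1‖ ^ 2 := by
  rw [aux_trace_ct_mul, Complex.re_sum]
  refine Finset.sum_congr rfl fun p _ => ?_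
  rw [mul_comm, Complex.mul_conj']
  norm_cast

theorem aux_cs {d : ℕ} (A B : Matrix (Fin d) (Fin d) ℂ) :
    |((Aᴴ * B).trace).re| ≤ fnorm A * fnorm B := by
  show _ ≤ Real.sqrt (((Aᴴ * A).trace).re) * Real.sqrt (((Bᴴ * B).trace).re)
  rw [aux_trace_ct_mul, aux_fnorm_sq_entries, aux_fnorm_sq_entries, Complex.re_sum]
  calc |∑ p : Fin d × Fin d, ((starRingEnd ℂ) (A p.2 p.1) * B p.2 p.1).re|
      ≤ ∑ p : Fin d × Fin d, ‖A p.2 p.1‖ * ‖B p.2 p.1‖ := by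
        refine (Finset.abs_sum_le_sum_abs _ _).trans (Finset.sum_le_sum fun p _ => ?_)
        calc |((starRingEnd ℂ) (A p.2 p.1) * B p.2 p.1).re|
            ≤ ‖(starRingEnd ℂ) (A p.2 p.1) * B p.2 p.1‖ := Complex.abs_re_le_norm _
          _ = ‖A p.2 p.1‖ * ‖B p.2 p.1‖ := by rw [norm_mul, RCLike.norm_conj]
    _ ≤ Real.sqrt (∑ p : Fin d × Fin d, ‖A p.2 p.1‖ ^ 2) *
        Real.sqrt (∑ p : Fin d × Fin d, ‖B p.2 p.1‖ ^ 2) := by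
        have h := Finset.sum_mul_sq_le_sq_mul_sq Finset.univ
          (fun p : Fin d × Fin d => ‖A p.2 p.1‖) (fun p => ‖B p.2 p.1‖)
        have hnn : (0:ℝ) ≤ ∑ p : Fin d × Fin d, ‖A p.2 p.1‖ * ‖B p.2 p.1‖ :=
          Finset.sum_nonneg fun p _ => mul_nonneg (norm_nonneg _) (norm_nonneg _)
        calc ∑ p : Fin d × Fin d, ‖A p.2 p.1‖ * ‖B p.2 p.1‖
            = Real.sqrt ((∑ p : Fin d × Fin d, ‖A p.2 p.1‖ * ‖B p.2 p.1‖)^2) :=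
              (Real.sqrt_sq hnn).symm
          _ ≤ Real.sqrt ((∑ p : Fin d × Fin d, ‖A p.2 p.1‖^2)
              * ∑ p : Fin d × Fin d, ‖B p.2 p.1‖^2) := Real.sqrt_le_sqrt h
          _ = _ := Real.sqrt_mul (Finset.sum_nonneg fun p _ => sq_nonneg _) _

theorem aux_cs' {d : ℕ} (A B : Matrix (Fin d) (Fin d) ℂ) (hA : A.IsHermitian) :
    |((A * B).trace).re| ≤ fnorm A * fnorm B := by
  have h := aux_cs A B
  rwa [hA.eq] at h

/-! ### facts about `X = xx*` -/

theorem aux_X_herm {d : ℕ} (x : Fin d → ℂ) : (Matrix.vecMulVec x (star x)).IsHermitian := by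
  ext i j
  simp [Matrix.vecMulVec_apply, Matrix.conjTranspose_apply, mul_comm]

theorem aux_X_trace {d : ℕ} (x : Fin d → ℂ) (hx : ∑ j, ‖x j‖ ^ 2 = 1) :
    (Matrix.vecMulVec x (star x)).trace = 1 := by
  rw [Matrix.trace]
  have : ∀ i, (Matrix.vecMulVec x (star x)).diag i = (‖x i‖ ^ 2 : ℝ) := by
    intro i
    simp [Matrix.vecMulVec_apply, Matrix.diag_apply, Pi.star_apply, Complex.mul_conj']
  rw [Finset.sum_congr rfl fun i _ => this i]
  exact_mod_cast hx

theorem aux_X_mul_X {d : ℕ} (x : Fin d → ℂ) (hx : ∑ j, ‖x j‖ ^ 2 = 1) :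
    (Matrix.vecMulVec x (star x)) * (Matrix.vecMulVec x (star x))
      = Matrix.vecMulVec x (star x) := by
  ext i j
  simp only [Matrix.mul_apply, Matrix.vecMulVec_apply, Pi.star_apply]
  have key : ∀ k, x i * star (x k) * (x k * star (x j)) = (‖x k‖^2 : ℂ) * (x i * star (x j)) := by
    intro k
    have hk : star (x k) * x k = ((‖x k‖^2 : ℝ) : ℂ) := by
      rw [RCLike.star_def, mul_comm, Complex.mul_conj']; norm_cast
    calc x i * star (x k) * (x k * star (x j)) = (star (x k) * x k) * (x i * star (x j)) := by ring
      _ = (‖x k‖^2 : ℂ) * (x i * star (x j)) := by rw [hk]; norm_num [Complex.ofReal_pow]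
  rw [Finset.sum_congr rfl fun k _ => key k, ← Finset.sum_mul]
  have : (∑ k, (‖x k‖^2 : ℂ)) = 1 := by exact_mod_cast hx
  rw [this, one_mul]

theorem aux_X_mul_mul {d : ℕ} (x : Fin d → ℂ) (Z : Matrix (Fin d) (Fin d) ℂ) :
    (Matrix.vecMulVec x (star x)) * Z * (Matrix.vecMulVec x (star x))
      = ((Matrix.vecMulVec x (star x)) * Z).trace • Matrix.vecMulVec x (star x) := by
  ext i j
  simp only [Matrix.mul_apply, Matrix.vecMulVec_apply, Pi.star_apply, Matrix.smul_apply,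
    Matrix.trace, Matrix.diag_apply, smul_eq_mul, Finset.sum_mul, Finset.mul_sum]
  rw [Finset.sum_comm]
  conv_rhs => rw [Finset.sum_comm]
  refine Finset.sum_congr rfl fun k _ => Finset.sum_congr rfl fun l _ => by ring

/-! ### facts about `PT` -/

theorem aux_PT_trace_comm {d : ℕ} {X : Matrix (Fin d) (Fin d) ℂ}
    (A B : Matrix (Fin d) (Fin d) ℂ) :
    ((PT X A) * B).trace = (A * (PT X B)).trace := by
  simp only [PT, Matrix.sub_mul, Matrix.add_mul, Matrix.mul_sub, Matrix.mul_add,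
    Matrix.smul_mul, Matrix.mul_smul, Matrix.trace_sub, Matrix.trace_add, Matrix.trace_smul]
  rw [Matrix.mul_assoc X A B, Matrix.mul_assoc A X B]
  rw [Matrix.trace_mul_comm X (A * B), Matrix.mul_assoc A B X, Matrix.trace_mul_comm X A]
  simp only [smul_eq_mul]
  ring

theorem aux_PT_sub {d : ℕ} {X : Matrix (Fin d) (Fin d) ℂ} (A B : Matrix (Fin d) (Fin d) ℂ) :
    PT X (A - B) = PT X A - PT X B := by
  simp only [PT, Matrix.mul_sub, Matrix.sub_mul, Matrix.trace_sub, sub_smul]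
  abel

theorem aux_PT_idem {d : ℕ} {X : Matrix (Fin d) (Fin d) ℂ} (hXX : X * X = X) (htX : X.trace = 1)
    (hXZX : ∀ Z, X * Z * X = (X * Z).trace • X) (Z : Matrix (Fin d) (Fin d) ℂ) :
    PT X (PT X Z) = PT X Z := by
  have h1 : X * (PT X Z) = X * Z + X * Z * X - (X * Z).trace • X := by
    simp only [PT, Matrix.mul_add, Matrix.mul_sub, Matrix.mul_smul, ← Matrix.mul_assoc, hXX]
  have h2 : (PT X Z) * X = X * Z * X + Z * X - (X * Z).trace • X := by
    simp only [PT, Matrix.add_mul, Matrix.sub_mul, Matrix.smul_mul, Matrix.mul_assoc, hXX]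
  have h3 : (X * (PT X Z)).trace = (X * Z).trace := by
    rw [h1, Matrix.trace_sub, Matrix.trace_add, Matrix.trace_smul, hXZX Z, Matrix.trace_smul, htX]
    simp
  rw [h1] at h3
  rw [PT, h1, h2, h3, hXZX Z]
  simp only [PT]
  abel

theorem aux_PT_X {d : ℕ} {X : Matrix (Fin d) (Fin d) ℂ} (hXX : X * X = X) (htX : X.trace = 1) :
    PT X X = X := by
  rw [PT, hXX, htX, one_smul]
  abel

theorem aux_PT_herm {d : ℕ} {X : Matrix (Fin d) (Fin d) ℂ} (hXh : X.IsHermitian)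
    {Z : Matrix (Fin d) (Fin d) ℂ} (hZ : Z.IsHermitian) : (PT X Z).IsHermitian := by
  have ht : star ((X * Z).trace) = (X * Z).trace := by
    rw [← Matrix.trace_conjTranspose, Matrix.conjTranspose_mul, hXh.eq, hZ.eq,
      Matrix.trace_mul_comm]
  unfold Matrix.IsHermitian
  rw [PT, Matrix.conjTranspose_sub, Matrix.conjTranspose_add, Matrix.conjTranspose_mul,
    Matrix.conjTranspose_mul, Matrix.conjTranspose_smul, hXh.eq, hZ.eq, ht]
  abel

theorem aux_PT_trace {d : ℕ} {X : Matrix (Fin d) (Fin d) ℂ} (htX : X.trace = 1)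
    (Z : Matrix (Fin d) (Fin d) ℂ) : (PT X Z).trace = (X * Z).trace := by
  rw [PT, Matrix.trace_sub, Matrix.trace_add, Matrix.trace_smul, Matrix.trace_mul_comm Z X, htX]
  simp

theorem stmt11 {d : ℕ} (x : Fin d → ℂ) (hx : ∑ j, ‖x j‖ ^ 2 = 1)
    (X : Matrix (Fin d) (Fin d) ℂ) (hX : X = Matrix.vecMulVec x (star x))
    (Δ Y : Matrix (Fin d) (Fin d) ℂ) (hΔ : Δ.IsHermitian) (hY : Y.IsHermitian)
    (h1 : fnorm (PT X Δ) ≤ 2 * d * fnorm (Δ - PT X Δ))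
    (horth : (Y * Δ).trace = 0)
    (h2 : fnorm (PT X Y - X) ≤ 1 / (4 * d))
    (h3 : onorm (Y - PT X Y) ≤ 1 / 2) :
    0 ≤ ((PT X Δ).trace).re + tnorm (Δ - PT X Δ) ∧
    ((fnorm (PT X Δ) < 2 * d * fnorm (Δ - PT X Δ) ∧ Δ - PT X Δ ≠ 0) →
      0 < ((PT X Δ).trace).re + tnorm (Δ - PT X Δ)) := by
  have hXh : X.IsHermitian := by rw [hX]; exact aux_X_herm x
  have htX : X.trace = 1 := by rw [hX]; exact aux_X_trace x hx
  have hXX : X * X = X := by rw [hX]; exact aux_X_mul_X x hx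
  have hXZX : ∀ Z, X * Z * X = (X * Z).trace • X := by
    intro Z; rw [hX]; exact aux_X_mul_mul x Z
  have hΔT : (PT X Δ).IsHermitian := aux_PT_herm hXh hΔ
  have hΔp : (Δ - PT X Δ).IsHermitian := hΔ.sub hΔT
  have hYT : (PT X Y).IsHermitian := aux_PT_herm hXh hY
  have hYTX : (PT X Y - X).IsHermitian := hYT.sub hXh
  -- trace decomposition
  have hPTΔp : PT X (Δ - PT X Δ) = 0 := by
    rw [aux_PT_sub, aux_PT_idem hXX htX hXZX, sub_self]
  have hPTYp : PT X (Y - PT X Y) = 0 := by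
    rw [aux_PT_sub, aux_PT_idem hXX htX hXZX, sub_self]
  have hYcross : ((PT X Y) * (Δ - PT X Δ)).trace = 0 := by
    rw [aux_PT_trace_comm, hPTΔp, Matrix.mul_zero, Matrix.trace_zero]
  have hYpcross : ((Y - PT X Y) * PT X Δ).trace = 0 := by
    rw [Matrix.trace_mul_comm, aux_PT_trace_comm, hPTYp, Matrix.mul_zero, Matrix.trace_zero]
  have hXΔT : (X * PT X Δ).trace = (PT X Δ).trace := by
    have h := aux_PT_trace_comm (X := X) X Δ
    rw [aux_PT_X hXX htX] at h
    rw [← h, ← aux_PT_trace htX]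
  have hdecomp : (Y * Δ).trace = ((PT X Y - X) * PT X Δ).trace + (PT X Δ).trace
      + ((Y - PT X Y) * (Δ - PT X Δ)).trace := by
    have e : Y * Δ = (PT X Y) * (PT X Δ) + (PT X Y) * (Δ - PT X Δ)
        + (Y - PT X Y) * (PT X Δ) + (Y - PT X Y) * (Δ - PT X Δ) := by noncomm_ring
    rw [e, Matrix.trace_add, Matrix.trace_add, Matrix.trace_add, hYcross, hYpcross,
      Matrix.sub_mul (PT X Y) X (PT X Δ), Matrix.trace_sub, hXΔT]
    ring
  -- real-part bounds
  have hre0 : ((PT X Y - X) * PT X Δ).trace.re + (PT X Δ).trace.re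
      + ((Y - PT X Y) * (Δ - PT X Δ)).trace.re = 0 := by
    have := congrArg Complex.re hdecomp
    rw [horth] at this
    simp only [Complex.add_re, Complex.zero_re] at this
    linarith [this.symm]
  have hb1 : |((PT X Y - X) * PT X Δ).trace.re| ≤ fnorm (PT X Y - X) * fnorm (PT X Δ) :=
    aux_cs' _ _ hYTX
  have hb2 : |((Y - PT X Y) * (Δ - PT X Δ)).trace.re| ≤ onorm (Y - PT X Y) * tnorm (Δ - PT X Δ) :=
    aux_holder _ _ hΔp
  have hfn1 : (0:ℝ) ≤ fnorm (PT X Δ) := Real.sqrt_nonneg _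
  have hfn2 : (0:ℝ) ≤ fnorm (Δ - PT X Δ) := Real.sqrt_nonneg _
  have hfn3 : (0:ℝ) ≤ fnorm (PT X Y - X) := Real.sqrt_nonneg _
  have hon : (0:ℝ) ≤ onorm (Y - PT X Y) := norm_nonneg _
  have htn : (0:ℝ) ≤ tnorm (Δ - PT X Δ) := aux_tnorm_nonneg _ hΔp
  have hft : fnorm (Δ - PT X Δ) ≤ tnorm (Δ - PT X Δ) := aux_fnorm_le_tnorm _ hΔp
  have hq : (0:ℝ) ≤ 1 / (4 * (d:ℝ)) := le_trans hfn3 h2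
  have hab : fnorm (PT X Y - X) * fnorm (PT X Δ) ≤ (1 / (4 * (d:ℝ))) * fnorm (PT X Δ) :=
    mul_le_mul_of_nonneg_right h2 hfn1
  have hbb : (1 / (4 * (d:ℝ))) * fnorm (PT X Δ)
      ≤ (1 / (4 * (d:ℝ))) * (2 * d * fnorm (Δ - PT X Δ)) :=
    mul_le_mul_of_nonneg_left h1 hq
  have hcc : (1 / (4 * (d:ℝ))) * (2 * d * fnorm (Δ - PT X Δ))
      ≤ (1/2) * fnorm (Δ - PT X Δ) := by
    rcases Nat.eq_zero_or_pos d with hd | hd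
    · subst hd
      have hz : (1 / (4 * ((0:ℕ):ℝ))) * (2 * ((0:ℕ):ℝ) * fnorm (Δ - PT X Δ)) = 0 := by
        norm_num
      rw [hz]
      positivity
    · have hdpos : (0:ℝ) < d := by exact_mod_cast hd
      have he : (1 / (4 * (d:ℝ))) * (2 * d * fnorm (Δ - PT X Δ))
          = (1/2) * fnorm (Δ - PT X Δ) := by
        field_simp
        ring
      exact le_of_eq he
  have hot : onorm (Y - PT X Y) * tnorm (Δ - PT X Δ) ≤ (1/2) * tnorm (Δ - PT X Δ) :=
    mul_le_mul_of_nonneg_right h3 htn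
  have habs1 := abs_le.mp hb1
  have habs2 := abs_le.mp hb2
  constructor
  · linarith [habs1.1, habs1.2, habs2.1, habs2.2]
  · rintro ⟨hstrict, hne⟩
    have hd : 0 < d := by
      by_contra hd0
      push_neg at hd0
      interval_cases d
      exact hne (Subsingleton.elim _ _)
    have hdpos : (0:ℝ) < d := by exact_mod_cast hd
    have hqpos : (0:ℝ) < 1 / (4 * (d:ℝ)) := by positivity
    have hbb' : (1 / (4 * (d:ℝ))) * fnorm (PT X Δ)
        < (1 / (4 * (d:ℝ))) * (2 * d * fnorm (Δ - PT X Δ)) :=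
      mul_lt_mul_of_pos_left hstrict hqpos
    linarith [habs1.1, habs2.1]
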